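/- arXiv:2310.04593 — 3 statements merged into one kernel-verified Lean document; each statement's English description precedes it below -/
import Mathlib

section
/- Let T be a Perov contraction on a vector-valued metric space (V,d) with nonnegative coefficient matrix B satisfying ρ(B) < 1. Then there exists k ∈ ℕ such that the k-th iterate T^k is a contraction with respect to the metric ‖d‖(v₁,v₂) = maxₙ dₙ(v₁,v₂), i.e., there exists β ∈ [0,1) with ‖d‖(T^k v₁, T^k v₂) ≤ β ‖d‖(v₁,v₂) for all v₁,v₂. -/
/-- Spectral radius of a real square matrix. -/
noncomputable def specRad {n : Type*} [Fintype n] [DecidableEq n]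
    (B : Matrix n n ℝ) : ℝ :=
  sSup {r : ℝ | ∃ μ ∈ spectrum ℂ (B.map (Complex.ofReal ·)), r = ‖μ‖}

open scoped ENNReal NNReal

attribute [local instance]
  Matrix.linftyOpNormedRing Matrix.linftyOpNormedAlgebra

/-- If the spectral radius is `< 1`, some power has linfty operator norm `< 1`. -/
lemma exists_pow_norm_lt_one {N : ℕ} (_hN : 0 < N) (B : Matrix (Fin N) (Fin N) ℝ)
    (hρ : specRad B < 1) :
    ∃ k : ℕ, 0 < k ∧ ‖((B.map (Complex.ofReal ·)) ^ k)‖₊ < 1 := by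
  set C : Matrix (Fin N) (Fin N) ℂ := B.map (Complex.ofReal ·) with hC
  have hspec : spectralRadius ℂ C < 1 := by
    have hbdd : BddAbove {r : ℝ | ∃ μ ∈ spectrum ℂ C, r = ‖μ‖} := by
      have h1 : {r : ℝ | ∃ μ ∈ spectrum ℂ C, r = ‖μ‖}
          = (‖·‖) '' spectrum ℂ C := by
        ext r; simp [Set.mem_image, eq_comm]
      rw [h1]
      exact ((spectrum.isCompact C).image continuous_norm).bddAbove
    have hle : spectralRadius ℂ C ≤ ENNReal.ofReal (specRad B) := by
      rw [spectralRadius]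
      refine iSup₂_le fun μ hμ => ?_
      have h2 : ‖μ‖ ≤ specRad B := le_csSup hbdd ⟨μ, hμ, rfl⟩
      calc (‖μ‖₊ : ℝ≥0∞) = ENNReal.ofReal ‖μ‖ := by
            rw [ofReal_norm]; rfl
        _ ≤ ENNReal.ofReal (specRad B) := ENNReal.ofReal_le_ofReal h2
    exact lt_of_le_of_lt hle (by simpa using ENNReal.ofReal_lt_one.2 hρ)
  have hg := spectrum.pow_nnnorm_pow_one_div_tendsto_nhds_spectralRadius C
  have hev : ∀ᶠ k : ℕ in Filter.atTop,
      (‖C ^ k‖₊ : ℝ≥0∞) ^ (1 / (k : ℝ)) < 1 := hg.eventually (gt_mem_nhds hspec)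
  obtain ⟨k, hlt, hk1⟩ := (hev.and (Filter.eventually_ge_atTop 1)).exists
  refine ⟨k, hk1, ?_⟩
  have hk0 : (k : ℝ) ≠ 0 := by positivity
  have hx : (‖C ^ k‖₊ : ℝ≥0∞) = ((‖C ^ k‖₊ : ℝ≥0∞) ^ (1 / (k : ℝ))) ^ (k : ℝ) := by
    rw [← ENNReal.rpow_mul, one_div_mul_cancel hk0, ENNReal.rpow_one]
  have : (‖C ^ k‖₊ : ℝ≥0∞) < 1 := by
    rw [hx]
    exact ENNReal.rpow_lt_one hlt (by positivity)
  exact_mod_cast this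
  
/-- A Perov contraction is an eventual contraction: some iterate `T^k` is a
contraction with respect to the metric `‖d‖(v₁,v₂) = max_n dₙ(v₁,v₂)`. -/
theorem stmt_3 {V : Type*} {N : ℕ} (d : V → V → Fin N → ℝ)
    (hnn : ∀ v₁ v₂ n, 0 ≤ d v₁ v₂ n)
    (heq : ∀ v₁ v₂, d v₁ v₂ = 0 ↔ v₁ = v₂)
    (hsymm : ∀ v₁ v₂, d v₁ v₂ = d v₂ v₁)
    (htri : ∀ v₁ v₂ v₃ n, d v₁ v₃ n ≤ d v₁ v₂ n + d v₂ v₃ n)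
    (B : Matrix (Fin N) (Fin N) ℝ) (hB : ∀ m n, 0 ≤ B m n)
    (hρ : specRad B < 1)
    (T : V → V)
    (hT : ∀ v₁ v₂ n, d (T v₁) (T v₂) n ≤ (B.mulVec (d v₁ v₂)) n) :
    ∃ (k : ℕ) (β : ℝ), 0 < k ∧ 0 ≤ β ∧ β < 1 ∧
      ∀ v₁ v₂ : V, (⨆ n, d (T^[k] v₁) (T^[k] v₂) n) ≤ β * ⨆ n, d v₁ v₂ n := by
  rcases Nat.eq_zero_or_pos N with hN | hN
  · subst hN
    refine ⟨1, 0, one_pos, le_refl _, one_pos, fun v₁ v₂ => ?_⟩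
    simp [iSup, Set.range_eq_empty, Real.sSup_empty]
  obtain ⟨k, hk0, hk⟩ := exists_pow_norm_lt_one hN B hρ
  set C : Matrix (Fin N) (Fin N) ℂ := B.map (Complex.ofReal ·) with hC
  set β : ℝ := ‖C ^ k‖ with hβ
  have hβ1 : β < 1 := hk
  -- entries of powers of B are nonneg
  have hpow : ∀ m : ℕ, ∀ i j, 0 ≤ (B ^ m) i j := by
    intro m
    induction m with
    | zero => intro i j; by_cases hij : i = j <;>
        simp [Matrix.one_apply, hij]
    | succ m ih =>
      intro i j
      rw [pow_succ, Matrix.mul_apply]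
      exact Finset.sum_nonneg fun l _ => mul_nonneg (ih i l) (hB l j)
  -- iteration bound
  have hiter : ∀ m : ℕ, ∀ v₁ v₂ n,
      d (T^[m] v₁) (T^[m] v₂) n ≤ ((B ^ m).mulVec (d v₁ v₂)) n := by
    intro m
    induction m with
    | zero => intro v₁ v₂ n; simp [Matrix.one_mulVec]
    | succ m ih =>
      intro v₁ v₂ n
      rw [Function.iterate_succ_apply, Function.iterate_succ_apply]
      calc d (T^[m] (T v₁)) (T^[m] (T v₂)) n
          ≤ ((B ^ m).mulVec (d (T v₁) (T v₂))) n := ih (T v₁) (T v₂) n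
        _ ≤ ((B ^ m).mulVec (B.mulVec (d v₁ v₂))) n := by
            simp only [Matrix.mulVec, dotProduct]
            exact Finset.sum_le_sum fun j _ =>
              mul_le_mul_of_nonneg_left (hT v₁ v₂ j) (hpow m n j)
        _ = ((B ^ (m + 1)).mulVec (d v₁ v₂)) n := by
            rw [pow_succ, ← Matrix.mulVec_mulVec]
  -- C ^ k = (B ^ k).map ofReal
  have hCk : ∀ i j, (C ^ k) i j = Complex.ofReal ((B ^ k) i j) := by
    have : C ^ k = (Complex.ofRealHom.mapMatrix (B ^ k) : Matrix (Fin N) (Fin N) ℂ) := by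
      rw [map_pow]; rfl
    intro i j; rw [this]; rfl
  -- row sums of B^k are ≤ β
  have hrow : ∀ i, ∑ j, (B ^ k) i j ≤ β := by
    intro i
    have h1 : (∑ j, ‖(C ^ k) i j‖₊) ≤ ‖C ^ k‖₊ := by
      rw [Matrix.linfty_opNNNorm_def]
      exact Finset.le_sup (f := fun i => ∑ j, ‖(C ^ k) i j‖₊) (Finset.mem_univ i)
    have h2 : ∑ j, (B ^ k) i j = ∑ j, ‖(C ^ k) i j‖ := by
      refine Finset.sum_congr rfl fun j _ => ?_
      rw [hCk, Complex.norm_real, Real.norm_eq_abs, abs_of_nonneg (hpow k i j)]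
    rw [h2]
    calc (∑ j, ‖(C ^ k) i j‖) = ((∑ j, ‖(C ^ k) i j‖₊ : ℝ≥0) : ℝ) := by
          push_cast [coe_nnnorm]; rfl
      _ ≤ ((‖C ^ k‖₊ : ℝ≥0) : ℝ) := by exact_mod_cast h1
      _ = β := rfl
  refine ⟨k, β, hk0, norm_nonneg _, hβ1, fun v₁ v₂ => ?_⟩
  have : Nonempty (Fin N) := ⟨⟨0, hN⟩⟩
  set D := d v₁ v₂ with hD
  set S := ⨆ n, D n with hS
  have hDS : ∀ j, D j ≤ S := fun j =>
    le_ciSup (Set.Finite.bddAbove (Set.finite_range _)) j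
  have hS0 : 0 ≤ S := le_trans (hnn v₁ v₂ ⟨0, hN⟩) (hDS _)
  refine ciSup_le fun n => ?_
  calc d (T^[k] v₁) (T^[k] v₂) n ≤ ((B ^ k).mulVec D) n := hiter k v₁ v₂ n
    _ = ∑ j, (B ^ k) n j * D j := rfl
    _ ≤ ∑ j, (B ^ k) n j * S := Finset.sum_le_sum fun j _ =>
        mul_le_mul_of_nonneg_left (hDS j) (hpow k n j)
    _ = (∑ j, (B ^ k) n j) * S := by rw [← Finset.sum_mul]
    _ ≤ β * S := mul_le_mul_of_nonneg_right (hrow n) hS0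
end

section
/- Generalized Blackwell sufficient condition: Let X be a set and V a space of functions v : X → ℝ^N closed under addition of nonnegative constant vectors, on which dₙ(u,v) := sup_{x∈X} |uₙ(x) − vₙ(x)| is finite for all u,v ∈ V and all n. Suppose T : V → V is monotone (u ≤ v pointwise entrywise implies Tu ≤ Tv) and satisfies discounting: there exists a nonnegative matrix B ∈ ℝ^{N×N} with ρ(B) < 1 such that T(v + c) ≤ Tv + Bc for all v ∈ V and c ∈ ℝ₊^N (with c interpreted as a constant function). Then T is a Perov contraction with coefficient matrix B: d(Tv₁,Tv₂) ≤ B d(v₁,v₂) entrywise for all v₁,v₂ ∈ V. -/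
/-- Generalized Blackwell sufficient condition: a monotone operator with
matrix discounting is a Perov contraction with coefficient matrix `B`. -/
theorem stmt_6 {X : Type*} {N : ℕ} (V : Set (X → Fin N → ℝ))
    -- upward shift: closed under addition of nonnegative constant vectors
    (hshift : ∀ v ∈ V, ∀ c : Fin N → ℝ, (∀ n, 0 ≤ c n) →
      (fun x n => v x n + c n) ∈ V)
    -- bounded difference
    (hbdd : ∀ u ∈ V, ∀ v ∈ V, ∀ n : Fin N,
      BddAbove (Set.range fun x => |u x n - v x n|))
    (B : Matrix (Fin N) (Fin N) ℝ) (hB : ∀ m n, 0 ≤ B m n)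
    (hρ : specRad B < 1)
    (T : (X → Fin N → ℝ) → (X → Fin N → ℝ))
    (hTmap : ∀ v ∈ V, T v ∈ V)
    -- monotonicity
    (hmono : ∀ u ∈ V, ∀ v ∈ V, (∀ x n, u x n ≤ v x n) →
      ∀ x n, T u x n ≤ T v x n)
    -- discounting
    (hdisc : ∀ v ∈ V, ∀ c : Fin N → ℝ, (∀ n, 0 ≤ c n) →
      ∀ x m, T (fun x n => v x n + c n) x m ≤ T v x m + (B.mulVec c) m) :
    ∀ v₁ ∈ V, ∀ v₂ ∈ V, ∀ m : Fin N,
      (⨆ x, |T v₁ x m - T v₂ x m|) ≤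
        (B.mulVec (fun n => ⨆ x, |v₁ x n - v₂ x n|)) m := by
  intro v₁ hv₁ v₂ hv₂ m
  set d : Fin N → ℝ := fun n => ⨆ x, |v₁ x n - v₂ x n| with hd
  have hd0 : ∀ n, 0 ≤ d n := fun n => Real.iSup_nonneg (fun x => abs_nonneg _)
  have hdle : ∀ x n, |v₁ x n - v₂ x n| ≤ d n := fun x n =>
    le_ciSup (hbdd v₁ hv₁ v₂ hv₂ n) x
  have hBd0 : 0 ≤ (B.mulVec d) m := by
    unfold Matrix.mulVec dotProduct
    exact Finset.sum_nonneg fun n _ => mul_nonneg (hB m n) (hd0 n)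
  -- key one-sided bound
  have key : ∀ u ∈ V, ∀ w ∈ V, (∀ x n, u x n ≤ w x n + d n) →
      ∀ x, T u x m - T w x m ≤ (B.mulVec d) m := by
    intro u hu w hw hle x
    have h1 : T u x m ≤ T (fun x n => w x n + d n) x m :=
      hmono u hu _ (hshift w hw d hd0) hle x m
    have h2 := hdisc w hw d hd0 x m
    linarith
  have h12 : ∀ x, T v₁ x m - T v₂ x m ≤ (B.mulVec d) m :=
    key v₁ hv₁ v₂ hv₂ (fun x n => by
      have := (abs_le.mp (hdle x n)).2; linarith)
  have h21 : ∀ x, T v₂ x m - T v₁ x m ≤ (B.mulVec d) m :=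
    key v₂ hv₂ v₁ hv₁ (fun x n => by
      have := (abs_le.mp (hdle x n)).1; linarith)
  exact Real.iSup_le (fun x => abs_sub_le_iff.mpr ⟨h12 x, h21 x⟩) hBd0
end

section
/- Scaled Bellman operator is a Perov contraction: let X be a nonempty set, Z = {1,...,Z} finite with stochastic matrix P, Γ : X × Z → nonempty subsets of an action set A, g : X × Z × Z × A → X a transition function, β : Z × Z → [0,∞), and r̃ : graph(Γ) → ℝ a bounded scaled reward. Suppose there are constants γ̃(z,z') ≥ 0 such that for all (x,z) with a ∈ Γ(x,z) and all z', κ(g(x,z,z',a),z')/κ(x,z) ≤ γ̃(z,z')/β(z,z') (equivalently, γ̃ dominates β times the weight-ratio). Define B(z,z') = P(z,z')·γ̃(z,z') and assume ρ(B) < 1. Then the operator T̃ defined on the space of functions ṽ : X × Z → ℝ bounded in each z-slice by (T̃ṽ)(x,z) = sup_{a∈Γ(x,z)} { r̃(x,z,a) + Σ_{z'} P(z,z') β(z,z') (κ(g(x,z,z',a),z')/κ(x,z)) ṽ(g(x,z,z',a),z') } is a Perov contraction with coefficient matrix B, and hence has a unique fixed point. -/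
section spec
attribute [local instance] Matrix.linftyOpNormedRing Matrix.linftyOpNormedAlgebra

open Filter ENNReal NNReal in
lemma exists_pow_row_sum_lt {Z : Type*} [Fintype Z] [DecidableEq Z] [Nonempty Z]
    (Bm : Matrix Z Z ℝ) (hρ : specRad Bm < 1) :
    ∃ (n : ℕ) (c : ℝ), c < 1 ∧ ∀ z, ∑ z', |(Bm ^ n) z z'| ≤ c := by
  classical
  set M : Matrix Z Z ℂ := Bm.map (Complex.ofReal ·) with hMdef
  have hmap : ∀ k : ℕ, M ^ k = (Bm ^ k).map (Complex.ofReal ·) := by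
    intro k
    have h0 : M = Complex.ofRealHom.mapMatrix Bm := rfl
    have h1 : (Bm ^ k).map (Complex.ofReal ·) = Complex.ofRealHom.mapMatrix (Bm ^ k) := rfl
    rw [h0, h1, ← map_pow]
  -- spectral radius < 1
  have hbdd : BddAbove {r : ℝ | ∃ μ ∈ spectrum ℂ M, r = ‖μ‖} := by
    have : {r : ℝ | ∃ μ ∈ spectrum ℂ M, r = ‖μ‖} = (fun μ : ℂ => ‖μ‖) '' spectrum ℂ M := by
      ext rr; simp [Set.mem_image, eq_comm]
    rw [this]
    exact ((spectrum.isCompact M).image continuous_norm).bddAbove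
  have h1 : spectralRadius ℂ M < 1 := by
    have hle : spectralRadius ℂ M ≤ ENNReal.ofReal (specRad Bm) := by
      rw [spectralRadius]
      refine iSup₂_le fun μ hμ => ?_
      have : (‖μ‖₊ : ℝ≥0∞) = ENNReal.ofReal ‖μ‖ := (ofReal_norm μ).symm
      rw [this]
      refine ENNReal.ofReal_le_ofReal ?_
      exact le_csSup hbdd ⟨μ, hμ, rfl⟩
    exact hle.trans_lt (ENNReal.ofReal_lt_one.mpr hρ)
  have h2 := spectrum.pow_nnnorm_pow_one_div_tendsto_nhds_spectralRadius M
  have h3 : ∀ᶠ n : ℕ in atTop, (‖M ^ n‖₊ : ℝ≥0∞) ^ (1 / (n:ℝ)) < 1 :=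
    h2.eventually_lt_const h1
  obtain ⟨N, hN⟩ := h3.exists_forall_of_atTop
  set n := max N 1 with hn
  have hnorm : (‖M ^ n‖₊ : ℝ≥0∞) < 1 := by
    by_contra h
    push_neg at h
    have he : (0:ℝ) < 1 / (n:ℝ) := by
      have : (1:ℝ) ≤ (n:ℝ) := by exact_mod_cast le_max_right N 1
      positivity
    have := ENNReal.one_le_rpow h he
    exact absurd (hN n (le_max_left N 1)) (not_lt.mpr this)
  have hnorm' : ‖M ^ n‖ < 1 := by
    have : ‖M ^ n‖₊ < 1 := by exact_mod_cast hnorm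
    exact_mod_cast this
  refine ⟨n, ‖M ^ n‖, hnorm', fun z => ?_⟩
  have hrow : (∑ z', ‖(M ^ n) z z'‖₊ : ℝ≥0) ≤ ‖M ^ n‖₊ := by
    rw [Matrix.linfty_opNNNorm_def]
    exact Finset.le_sup (f := fun i => ∑ j : Z, ‖(M ^ n) i j‖₊) (Finset.mem_univ z)
  have : (∑ z', ‖(M ^ n) z z'‖ : ℝ) ≤ ‖M ^ n‖ := by simpa [NNReal.coe_sum] using NNReal.coe_le_coe.mpr hrow
  refine le_trans (le_of_eq ?_) this
  refine Finset.sum_congr rfl fun z' _ => ?_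
  rw [hmap n]
  simp [Matrix.map_apply, Complex.norm_real, Real.norm_eq_abs]
end spec


open BoundedContinuousFunction in
lemma perov_fixed_point {X Z : Type*} [Nonempty X] [Fintype Z] [DecidableEq Z] [Nonempty Z]
    (T : (X → Z → ℝ) → (X → Z → ℝ))
    (hTV : ∀ v : X → Z → ℝ, (∀ z, BddAbove (Set.range fun x => |v x z|)) →
      ∀ z, BddAbove (Set.range fun x => |T v x z|))
    (Bm : Z → Z → ℝ) (hBm : ∀ z z', 0 ≤ Bm z z')
    (hPer : ∀ u v : X → Z → ℝ, (∀ z, BddAbove (Set.range fun x => |u x z|)) →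
      (∀ z, BddAbove (Set.range fun x => |v x z|)) → ∀ z,
      (⨆ x, |T u x z - T v x z|) ≤ ∑ z', Bm z z' * ⨆ x, |u x z' - v x z'|)
    (n : ℕ) (c : ℝ) (hc : c < 1)
    (hrow : ∀ z, ∑ z', |(Matrix.of Bm ^ n) z z'| ≤ c) :
    ∃! v : X → Z → ℝ, (∀ z, BddAbove (Set.range fun x => |v x z|)) ∧ T v = v := by
  classical
  letI : TopologicalSpace (X × Z) := ⊥
  haveI : DiscreteTopology (X × Z) := ⟨rfl⟩
  set W := BoundedContinuousFunction (X × Z) ℝ with hW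
  set Vp : (X → Z → ℝ) → Prop := fun v => ∀ z, BddAbove (Set.range fun x => |v x z|) with hVp
  set e : W → (X → Z → ℝ) := fun f x z => f (x, z) with he
  have heV : ∀ f : W, Vp (e f) := by
    intro f z
    refine ⟨‖f‖, ?_⟩
    rintro y ⟨x, rfl⟩
    simpa [Real.norm_eq_abs] using f.norm_coe_le_norm (x, z)
  have einj : Function.Injective e := by
    intro a b h
    refine DFunLike.ext _ _ fun p => ?_
    have := congrFun (congrFun h p.1) p.2
    simpa [e] using this
  have hmk : ∀ v : X → Z → ℝ, Vp v → ∃ f : W, e f = v := by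
    intro v hv
    set C : ℝ := Finset.univ.sup' Finset.univ_nonempty
      (fun z => sSup (Set.range fun x => |v x z|)) with hC
    refine ⟨ofNormedAddCommGroupDiscrete (fun p => v p.1 p.2) C ?_, rfl⟩
    intro p
    rw [Real.norm_eq_abs]
    calc |v p.1 p.2| ≤ sSup (Set.range fun x => |v x p.2|) := le_csSup (hv p.2) ⟨p.1, rfl⟩
      _ ≤ C := Finset.le_sup' (f := fun z => sSup (Set.range fun x => |v x z|)) (Finset.mem_univ p.2)
  choose mk hmk' using hmk
  set Φ : W → W := fun f => mk (T (e f)) (fun z => hTV (e f) (heV f) z) with hΦdef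
  have hΦ : ∀ f : W, e (Φ f) = T (e f) := fun f => hmk' _ _
  have hpt : ∀ (f f' : W) (x : X) (z : Z), |e f x z - e f' x z| ≤ dist f f' := by
    intro f f' x z
    have := dist_coe_le_dist (f := f) (g := f') (x, z)
    rwa [Real.dist_eq] at this
  have hdiffB : ∀ u v : X → Z → ℝ, Vp u → Vp v → ∀ z,
      BddAbove (Set.range fun x => |u x z - v x z|) := by
    intro u v hu hv z
    obtain ⟨Cu, hCu⟩ := hu z
    obtain ⟨Cv, hCv⟩ := hv z
    refine ⟨Cu + Cv, ?_⟩
    rintro y ⟨x, rfl⟩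
    exact (abs_sub _ _).trans (add_le_add (hCu ⟨x, rfl⟩) (hCv ⟨x, rfl⟩))
  have hVit : ∀ (k : ℕ) (v : X → Z → ℝ), Vp v → Vp (T^[k] v) := by
    intro k
    induction k with
    | zero => intro v hv; simpa using hv
    | succ k ih =>
      intro v hv
      rw [Function.iterate_succ_apply']
      exact fun z => hTV _ (ih v hv) z
  have hiter : ∀ (k : ℕ) (u v : X → Z → ℝ), Vp u → Vp v → ∀ z,
      (⨆ x, |T^[k] u x z - T^[k] v x z|) ≤
        (Matrix.of Bm ^ k).mulVec (fun z' => ⨆ x, |u x z' - v x z'|) z := by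
    intro k
    induction k with
    | zero =>
      intro u v hu hv z
      simp [Matrix.one_mulVec]
    | succ k ih =>
      intro u v hu hv z
      simp only [Function.iterate_succ_apply']
      refine (hPer (T^[k] u) (T^[k] v) (hVit k u hu) (hVit k v hv) z).trans ?_
      have hstep : ∀ z' ∈ Finset.univ, Bm z z' * (⨆ x, |T^[k] u x z' - T^[k] v x z'|) ≤
          Bm z z' * (Matrix.of Bm ^ k).mulVec (fun z'' => ⨆ x, |u x z'' - v x z''|) z' :=
        fun z' _ => mul_le_mul_of_nonneg_left (ih u v hu hv z') (hBm z z')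
      refine (Finset.sum_le_sum hstep).trans (le_of_eq ?_)
      rw [pow_succ', ← Matrix.mulVec_mulVec]
      simp [Matrix.mulVec, dotProduct]
  have hc0 : 0 ≤ c :=
    le_trans (Finset.sum_nonneg fun z' _ => abs_nonneg _) (hrow (Classical.arbitrary Z))
  have heit : ∀ (k : ℕ) (f : W), e (Φ^[k] f) = T^[k] (e f) := by
    intro k
    induction k with
    | zero => intro f; simp
    | succ k ih =>
      intro f
      rw [Function.iterate_succ_apply', Function.iterate_succ_apply', hΦ, ih f]
  have hlip : ∀ f f' : W, dist (Φ^[n] f) (Φ^[n] f') ≤ c * dist f f' := by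
    intro f f'
    rw [BoundedContinuousFunction.dist_le (mul_nonneg hc0 dist_nonneg)]
    rintro ⟨x, z⟩
    rw [Real.dist_eq]
    have e1 : (Φ^[n] f) (x, z) = T^[n] (e f) x z := congrFun (congrFun (heit n f) x) z
    have e2 : (Φ^[n] f') (x, z) = T^[n] (e f') x z := congrFun (congrFun (heit n f') x) z
    rw [e1, e2]
    have h1 : |T^[n] (e f) x z - T^[n] (e f') x z| ≤
        ⨆ x, |T^[n] (e f) x z - T^[n] (e f') x z| :=
      le_ciSup (hdiffB _ _ (hVit n _ (heV f)) (hVit n _ (heV f')) z) x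
    refine h1.trans ((hiter n (e f) (e f') (heV f) (heV f') z).trans ?_)
    set dvec : Z → ℝ := fun z' => ⨆ x, |e f x z' - e f' x z'| with hdvec
    have hdz : ∀ z', dvec z' ≤ dist f f' := fun z' => ciSup_le fun x => hpt f f' x z'
    have hdz0 : ∀ z', 0 ≤ dvec z' := fun z' => Real.iSup_nonneg fun x => abs_nonneg _
    calc (Matrix.of Bm ^ n).mulVec dvec z = ∑ z', (Matrix.of Bm ^ n) z z' * dvec z' := by
          simp [Matrix.mulVec, dotProduct]
      _ ≤ ∑ z', |(Matrix.of Bm ^ n) z z'| * dist f f' := by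
          refine Finset.sum_le_sum fun z' _ => ?_
          calc (Matrix.of Bm ^ n) z z' * dvec z' ≤ |(Matrix.of Bm ^ n) z z'| * dvec z' :=
                mul_le_mul_of_nonneg_right (le_abs_self _) (hdz0 z')
            _ ≤ |(Matrix.of Bm ^ n) z z'| * dist f f' :=
                mul_le_mul_of_nonneg_left (hdz z') (abs_nonneg _)
      _ = (∑ z', |(Matrix.of Bm ^ n) z z'|) * dist f f' := (Finset.sum_mul _ _ _).symm
      _ ≤ c * dist f f' := mul_le_mul_of_nonneg_right (hrow z) dist_nonneg
  haveI : Nonempty W := ⟨BoundedContinuousFunction.const _ 0⟩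
  have hCW : ContractingWith ⟨c, hc0⟩ (Φ^[n]) := by
    constructor
    · exact_mod_cast hc
    · exact LipschitzWith.of_dist_le_mul fun f f' => hlip f f'
  set w : W := hCW.fixedPoint Φ^[n] with hwdef
  have hw : Function.IsFixedPt Φ w := hCW.isFixedPt_fixedPoint_iterate
  refine ⟨e w, ⟨heV w, (hΦ w).symm.trans (congrArg e hw)⟩, ?_⟩
  rintro v ⟨hvV, hvT⟩
  have hf : e (mk v hvV) = v := hmk' v hvV
  have hΦf : Φ (mk v hvV) = mk v hvV := by
    apply einj
    rw [hΦ, hf, hvT]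
  have hfix : Function.IsFixedPt Φ^[n] (mk v hvV) := Function.IsFixedPt.iterate hΦf n
  have : mk v hvV = w := hCW.fixedPoint_unique hfix
  rw [← hf, this]

/-- The scaled Bellman operator of an additive Markov dynamic program with a
bounded scaled reward is a Perov contraction with coefficient matrix
`B(z,z') = P(z,z') γ̃(z,z')`, and hence has a unique fixed point in the space
of functions bounded in each `z`-slice. -/
theorem stmt_11 {X Z A : Type*} [Nonempty X] [Fintype Z] [DecidableEq Z]
    [Nonempty Z]
    (P : Z → Z → ℝ) (hP0 : ∀ z z', 0 ≤ P z z') (hP1 : ∀ z, ∑ z', P z z' = 1)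
    (Γ : X → Z → Set A) (hΓ : ∀ x z, (Γ x z).Nonempty)
    (g : X → Z → Z → A → X)
    (β : Z → Z → ℝ) (hβ : ∀ z z', 0 ≤ β z z')
    (κ : X → Z → ℝ) (hκ : ∀ x z, 0 < κ x z)
    (r : X → Z → A → ℝ)
    -- the scaled reward is bounded on the graph of Γ
    (hr : ∀ z, ∃ M : ℝ, ∀ x, ∀ a ∈ Γ x z, |r x z a| ≤ M)
    (γ : Z → Z → ℝ) (hγ : ∀ z z', 0 ≤ γ z z')
    -- γ̃ dominates β times the weight ratio: β(z,z') κ(x',z') ≤ γ̃(z,z') κ(x,z)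
    (hdom : ∀ x z z', ∀ a ∈ Γ x z,
      β z z' * κ (g x z z' a) z' ≤ γ z z' * κ x z)
    (hρ : specRad (Matrix.of fun z z' => P z z' * γ z z') < 1) :
    let Ttil : (X → Z → ℝ) → (X → Z → ℝ) := fun v x z =>
      sSup {y : ℝ | ∃ a ∈ Γ x z, y = r x z a +
        ∑ z', P z z' * β z z' * (κ (g x z z' a) z' / κ x z) * v (g x z z' a) z'}
    let V : Set (X → Z → ℝ) := {v | ∀ z, BddAbove (Set.range fun x => |v x z|)}
    -- Ttil maps V into V
    (∀ v ∈ V, Ttil v ∈ V) ∧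
    -- Perov contraction with coefficient matrix B(z,z') = P(z,z') γ̃(z,z')
    (∀ u ∈ V, ∀ v ∈ V, ∀ z,
      (⨆ x, |Ttil u x z - Ttil v x z|) ≤
        ∑ z', P z z' * γ z z' * ⨆ x, |u x z' - v x z'|) ∧
    -- hence a unique fixed point in V
    (∃! v : X → Z → ℝ, v ∈ V ∧ Ttil v = v) := by
  intro Ttil V
  classical
  set coeff : X → Z → Z → A → ℝ :=
    fun x z z' a => P z z' * β z z' * (κ (g x z z' a) z' / κ x z) with hcoeff
  set F : (X → Z → ℝ) → X → Z → A → ℝ :=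
    fun v x z a => r x z a + ∑ z', coeff x z z' a * v (g x z z' a) z' with hFdef
  have hTS : ∀ v x z, Ttil v x z = sSup {y : ℝ | ∃ a ∈ Γ x z, y = F v x z a} := fun v x z => rfl
  have hc0 : ∀ x z z' a, 0 ≤ coeff x z z' a := fun x z z' a =>
    mul_nonneg (mul_nonneg (hP0 z z') (hβ z z')) (div_nonneg (hκ _ _).le (hκ _ _).le)
  have hcle : ∀ (x : X) (z z' : Z), ∀ a ∈ Γ x z, coeff x z z' a ≤ P z z' * γ z z' := by
    intro x z z' a ha
    have h1 : β z z' * (κ (g x z z' a) z' / κ x z) ≤ γ z z' := by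
      rw [mul_div_assoc']
      exact (div_le_iff₀ (hκ x z)).mpr (hdom x z z' a ha)
    calc coeff x z z' a = P z z' * (β z z' * (κ (g x z z' a) z' / κ x z)) := mul_assoc _ _ _
      _ ≤ P z z' * γ z z' := mul_le_mul_of_nonneg_left h1 (hP0 z z')
  choose Mr hMr using hr
  -- bound on F
  have hFb : ∀ v, v ∈ V → ∀ x z, ∀ a ∈ Γ x z,
      |F v x z a| ≤ Mr z + ∑ z', P z z' * γ z z' * sSup (Set.range fun x => |v x z'|) := by
    intro v hv x z a ha
    have hv' : ∀ (z : Z), BddAbove (Set.range fun x => |v x z|) := hv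
    have h1 : |∑ z', coeff x z z' a * v (g x z z' a) z'| ≤
        ∑ z', P z z' * γ z z' * sSup (Set.range fun x => |v x z'|) := by
      refine (Finset.abs_sum_le_sum_abs _ _).trans (Finset.sum_le_sum fun z' _ => ?_)
      rw [abs_mul, abs_of_nonneg (hc0 x z z' a)]
      have hb : |v (g x z z' a) z'| ≤ sSup (Set.range fun x => |v x z'|) :=
        le_csSup (hv' z') ⟨_, rfl⟩
      exact mul_le_mul (hcle x z z' a ha) hb (abs_nonneg _)
        (mul_nonneg (hP0 z z') (hγ z z'))
    calc |F v x z a| ≤ |r x z a| + |∑ z', coeff x z z' a * v (g x z z' a) z'| := abs_add_le _ _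
      _ ≤ _ := add_le_add (hMr z x a ha) h1
  have hSne : ∀ (v : X → Z → ℝ) x z, {y : ℝ | ∃ a ∈ Γ x z, y = F v x z a}.Nonempty :=
    fun v x z => ⟨F v x z (hΓ x z).choose, (hΓ x z).choose, (hΓ x z).choose_spec, rfl⟩
  have hSbdd : ∀ v, v ∈ V → ∀ x z, BddAbove {y : ℝ | ∃ a ∈ Γ x z, y = F v x z a} := by
    intro v hv x z
    refine ⟨Mr z + ∑ z', P z z' * γ z z' * sSup (Set.range fun x => |v x z'|), ?_⟩
    rintro y ⟨a, ha, rfl⟩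
    exact (abs_le.mp (hFb v hv x z a ha)).2
  -- Part 1
  have part1 : ∀ v ∈ V, Ttil v ∈ V := by
    intro v hv z
    refine ⟨Mr z + ∑ z', P z z' * γ z z' * sSup (Set.range fun x => |v x z'|), ?_⟩
    rintro y ⟨x, rfl⟩
    show |Ttil v x z| ≤ _
    rw [hTS, abs_le]
    obtain ⟨a0, ha0⟩ := hΓ x z
    constructor
    · exact le_trans (abs_le.mp (hFb v hv x z a0 ha0)).1
        (le_csSup (hSbdd v hv x z) ⟨a0, ha0, rfl⟩)
    · refine csSup_le (hSne v x z) ?_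
      rintro y ⟨a, ha, rfl⟩
      exact (abs_le.mp (hFb v hv x z a ha)).2
  -- bounded differences
  have hdiffB : ∀ u v : X → Z → ℝ, u ∈ V → v ∈ V → ∀ z,
      BddAbove (Set.range fun x => |u x z - v x z|) := by
    intro u v hu hv z
    obtain ⟨Cu, hCu⟩ := hu z
    obtain ⟨Cv, hCv⟩ := hv z
    refine ⟨Cu + Cv, ?_⟩
    rintro y ⟨x, rfl⟩
    exact (abs_sub _ _).trans (add_le_add (hCu ⟨x, rfl⟩) (hCv ⟨x, rfl⟩))
  -- Part 2
  have part2 : ∀ u ∈ V, ∀ v ∈ V, ∀ z,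
      (⨆ x, |Ttil u x z - Ttil v x z|) ≤
        ∑ z', P z z' * γ z z' * ⨆ x, |u x z' - v x z'| := by
    intro u hu v hv z
    set K : ℝ := ∑ z', P z z' * γ z z' * ⨆ x, |u x z' - v x z'| with hKdef
    have hDle : ∀ (z' : Z) (x : X), |u x z' - v x z'| ≤ ⨆ x, |u x z' - v x z'| :=
      fun z' x => le_ciSup (hdiffB u v hu hv z') x
    have hK : ∀ (x : X), ∀ a ∈ Γ x z, |F u x z a - F v x z a| ≤ K := by
      intro x a ha
      have hsplit : F u x z a - F v x z a =
          ∑ z', coeff x z z' a * (u (g x z z' a) z' - v (g x z z' a) z') := by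
        rw [hFdef]
        simp only [add_sub_add_left_eq_sub, ← Finset.sum_sub_distrib, mul_sub]
      rw [hsplit]
      refine (Finset.abs_sum_le_sum_abs _ _).trans (Finset.sum_le_sum fun z' _ => ?_)
      rw [abs_mul, abs_of_nonneg (hc0 x z z' a)]
      exact mul_le_mul (hcle x z z' a ha) (hDle z' _) (abs_nonneg _)
        (mul_nonneg (hP0 z z') (hγ z z'))
    refine ciSup_le fun x => ?_
    rw [abs_sub_le_iff]
    constructor
    · rw [hTS, hTS, sub_le_iff_le_add]
      refine csSup_le (hSne u x z) ?_
      rintro y ⟨a, ha, rfl⟩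
      have h1 : F u x z a ≤ K + F v x z a :=
        sub_le_iff_le_add.mp (abs_sub_le_iff.mp (hK x a ha)).1
      exact h1.trans (add_le_add_right (le_csSup (hSbdd v hv x z) ⟨a, ha, rfl⟩) K)
    · rw [hTS, hTS, sub_le_iff_le_add]
      refine csSup_le (hSne v x z) ?_
      rintro y ⟨a, ha, rfl⟩
      have h1 : F v x z a ≤ K + F u x z a :=
        sub_le_iff_le_add.mp (abs_sub_le_iff.mp (hK x a ha)).2
      exact h1.trans (add_le_add_right (le_csSup (hSbdd u hu x z) ⟨a, ha, rfl⟩) K)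
  refine ⟨part1, part2, ?_⟩
  -- Part 3
  obtain ⟨n, c, hc, hrow⟩ :=
    exists_pow_row_sum_lt (Matrix.of fun z z' => P z z' * γ z z') hρ
  exact perov_fixed_point Ttil (fun v hv => part1 v hv)
    (fun z z' => P z z' * γ z z') (fun z z' => mul_nonneg (hP0 z z') (hγ z z'))
    (fun u v hu hv => part2 u hu v hv) n c hc hrow
end
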